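/- For every real number x ≥ 0, the function H(x) = ln(cosh x) satisfies (1/2)·x·tanh(x) ≤ ln(cosh x) ≤ x·tanh(x). -/

import Mathlib

open Real

lemma hd_logcosh (x : ℝ) :
    HasDerivAt (fun y => Real.log (Real.cosh y)) (Real.tanh x) x := by
  have h := (Real.hasDerivAt_cosh x).log (Real.cosh_pos x).ne'
  simpa [Real.tanh_eq_sinh_div_cosh] using h

lemma hd_tanh (x : ℝ) :
    HasDerivAt Real.tanh (1 / (Real.cosh x) ^ 2) x := by
  have h := (Real.hasDerivAt_sinh x).div (Real.hasDerivAt_cosh x) (Real.cosh_pos x).ne'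
  have he : Real.tanh = fun y => Real.sinh y / Real.cosh y :=
    funext fun y => Real.tanh_eq_sinh_div_cosh y
  rw [he]
  refine h.congr_deriv ?_
  have hc : Real.cosh x * Real.cosh x - Real.sinh x * Real.sinh x = 1 := by
    have := Real.cosh_sq_sub_sinh_sq x
    nlinarith [this]
  rw [hc]

theorem tanh_log_cosh_bounds (x : ℝ) (hx : 0 ≤ x) :
    (1 / 2) * x * Real.tanh x ≤ Real.log (Real.cosh x) ∧
    Real.log (Real.cosh x) ≤ x * Real.tanh x := by
  -- G y = y * tanh y - log cosh y, H y = log cosh y - (1/2) y tanh y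
  set G : ℝ → ℝ := fun y => y * Real.tanh y - Real.log (Real.cosh y) with hG
  set H : ℝ → ℝ := fun y => Real.log (Real.cosh y) - (1 / 2) * y * Real.tanh y with hH
  have hdG : ∀ y : ℝ, HasDerivAt G (y * (1 / (Real.cosh y) ^ 2)) y := by
    intro y
    have h1 := ((hasDerivAt_id y).mul (hd_tanh y)).sub (hd_logcosh y)
    refine h1.congr_deriv ?_
    simp
  have hdH : ∀ y : ℝ,
      HasDerivAt H ((Real.sinh y * Real.cosh y - y) / (2 * (Real.cosh y) ^ 2)) y := by
    intro y
    have h1 := (hd_logcosh y).sub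
      (((hasDerivAt_id y).const_mul (1/2 : ℝ)).mul (hd_tanh y))
    refine h1.congr_deriv ?_
    have hc := (Real.cosh_pos y).ne'
    rw [Real.tanh_eq_sinh_div_cosh]
    field_simp
    ring
    rfl
  have hGmono : MonotoneOn G (Set.Ici (0:ℝ)) := by
    apply monotoneOn_of_deriv_nonneg (convex_Ici 0)
    · exact fun y _ => ((hdG y).continuousAt).continuousWithinAt
    · exact fun y _ => ((hdG y).differentiableAt).differentiableWithinAt
    · intro y hy
      rw [(hdG y).deriv]
      rw [interior_Ici] at hy
      exact mul_nonneg (le_of_lt hy) (by positivity)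
  have hHmono : MonotoneOn H (Set.Ici (0:ℝ)) := by
    apply monotoneOn_of_deriv_nonneg (convex_Ici 0)
    · exact fun y _ => ((hdH y).continuousAt).continuousWithinAt
    · exact fun y _ => ((hdH y).differentiableAt).differentiableWithinAt
    · intro y hy
      rw [(hdH y).deriv]
      rw [interior_Ici] at hy
      have hy0 : (0:ℝ) ≤ y := le_of_lt hy
      have hs : y ≤ Real.sinh y := Real.self_le_sinh_iff.2 hy0
      have hc : (1:ℝ) ≤ Real.cosh y := Real.one_le_cosh y
      have hsn : 0 ≤ Real.sinh y := Real.sinh_nonneg_iff.2 hy0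
      have hnum : y ≤ Real.sinh y * Real.cosh y := by nlinarith
      have hden : (0:ℝ) < 2 * Real.cosh y ^ 2 := by positivity
      exact div_nonneg (by linarith) hden.le
  have hG0 : G 0 = 0 := by simp [hG]
  have hH0 : H 0 = 0 := by simp [hH]
  have h1 := hGmono (Set.self_mem_Ici) (Set.mem_Ici.2 hx) hx
  have h2 := hHmono (Set.self_mem_Ici) (Set.mem_Ici.2 hx) hx
  rw [hG0] at h1
  rw [hH0] at h2
  constructor
  · have : (0:ℝ) ≤ Real.log (Real.cosh x) - (1/2) * x * Real.tanh x := h2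
    linarith
  · have : (0:ℝ) ≤ x * Real.tanh x - Real.log (Real.cosh x) := h1
    linarith
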